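/- If G is an r-regular (a,d)-distance antimagic graph on n vertices (n ≥ 2), then d ≤ r(n−r)/(n−1) and a = (r(n+1) − d(n−1))/2. -/

import Mathlib

set_option maxHeartbeats 1000000


open scoped Classical
open Finset

/-- Weight of a vertex: sum of labels over its open neighborhood. -/
noncomputable def wsum {V : Type*} [Fintype V] (G : SimpleGraph V) (f : V → ℕ) (u : V) : ℕ :=
  ∑ v ∈ Finset.univ.filter (fun v => G.Adj u v), f v

/-- A graph is distance magic if some bijective labeling by 1,...,n has constant weights. -/
def IsDistanceMagic {V : Type*} [Fintype V] (G : SimpleGraph V) : Prop :=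
  ∃ (f : V ≃ Fin (Fintype.card V)) (c : ℕ),
    ∀ u, wsum G (fun v => (f v : ℕ) + 1) u = c

/-- `G` is `r`-regular. -/
def IsRegularDeg {V : Type*} [Fintype V] (G : SimpleGraph V) (r : ℕ) : Prop :=
  ∀ u : V, (Finset.univ.filter (fun v => G.Adj u v)).card = r

/-- `(a,d)`-distance antimagic: some bijective labeling by 1,...,n has weight set
`{a, a+d, ..., a+(n-1)d}`. -/
def IsDistAntimagic {V : Type*} [Fintype V] (G : SimpleGraph V) (a d : ℕ) : Prop :=
  ∃ f : V ≃ Fin (Fintype.card V),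
    Finset.image (fun u => wsum G (fun v => (f v : ℕ) + 1) u) Finset.univ
      = Finset.image (fun i : Fin (Fintype.card V) => a + (i : ℕ) * d) Finset.univ

/-- Circulant graph on `N` vertices with jumps `1,...,m` (so `H_{2m,N} = C_N^m`). -/
def circulant (N m : ℕ) : SimpleGraph (Fin N) :=
  SimpleGraph.fromRel (fun i j => ∃ k, 1 ≤ k ∧ k ≤ m ∧ ((i : ℕ) + k) % N = (j : ℕ))

/-- The graph `(K_{n-1} - M) + K_1`: vertex `0` joined to all, and vertices `1,...,n-1`
forming a complete graph minus the perfect matching pairing `i` with `i + (n-1)/2 (mod n-1)`. -/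
def calG (n : ℕ) : SimpleGraph (Fin n) :=
  SimpleGraph.fromRel (fun i j =>
    (i : ℕ) = 0 ∨ (j : ℕ) = 0 ∨
      ¬ (((i : ℕ) - 1 + (n - 1) / 2) % (n - 1) = (j : ℕ) - 1))

/-- Lexicographic product `G ∘ H`. -/
def lexProd {α β : Type*} (G : SimpleGraph α) (H : SimpleGraph β) : SimpleGraph (α × β) where
  Adj x y := G.Adj x.1 y.1 ∨ (x.1 = y.1 ∧ H.Adj x.2 y.2)
  symm := ⟨by
    rintro ⟨a, b⟩ ⟨c, d⟩ (h | ⟨h1, h2⟩)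
    · exact Or.inl h.symm
    · exact Or.inr ⟨h1.symm, h2.symm⟩⟩
  loopless := ⟨by
    rintro ⟨a, b⟩ (h | ⟨-, h⟩)
    · exact G.loopless.irrefl a h
    · exact H.loopless.irrefl b h⟩

/-- Direct (tensor) product `G × H`. -/
def tensorProd {α β : Type*} (G : SimpleGraph α) (H : SimpleGraph β) : SimpleGraph (α × β) where
  Adj x y := G.Adj x.1 y.1 ∧ H.Adj x.2 y.2
  symm := ⟨fun _ _ h => ⟨h.1.symm, h.2.symm⟩⟩
  loopless := ⟨fun x h => G.loopless.irrefl x.1 h.1⟩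

/-- The Harary graph `H_{3,n}`. -/
noncomputable def harary3 (n : ℕ) : SimpleGraph (Fin n) :=
  circulant n 1 ⊔ SimpleGraph.fromRel (fun i j =>
    if n % 2 = 0 then
      ∃ k, 1 ≤ k ∧ k ≤ n / 2 ∧ (i : ℕ) = k ∧ (j : ℕ) = (k + n / 2) % n
    else
      ((i : ℕ) = 0 ∧ ((j : ℕ) = (n - 1) / 2 ∨ (j : ℕ) = (n + 1) / 2)) ∨
      (∃ k, 1 ≤ k ∧ k < (n - 1) / 2 ∧ (i : ℕ) = k ∧ (j : ℕ) = (k + (n + 1) / 2) % n))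

/-- The Harary graph `H_{2n+1,2n+3}`: `C_{2n+3}^n` together with edges `v_0 v_{n+1}`,
`v_0 v_{n+2}` and `v_i v_{i+n+2}` for `1 ≤ i < n+1`. -/
def hararyOdd (n : ℕ) : SimpleGraph (Fin (2 * n + 3)) :=
  circulant (2 * n + 3) n ⊔ SimpleGraph.fromRel (fun i j =>
    ((i : ℕ) = 0 ∧ ((j : ℕ) = n + 1 ∨ (j : ℕ) = n + 2)) ∨
    (∃ k, 1 ≤ k ∧ k < n + 1 ∧ (i : ℕ) = k ∧ (j : ℕ) = k + n + 2))

/-- The Harary graph `H_{4n+1,4n+4}`: circulant with jumps `1,...,2n` and `2n+2`. -/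
def harary41 (n : ℕ) : SimpleGraph (Fin (4 * n + 4)) :=
  SimpleGraph.fromRel (fun i j =>
    ∃ k, ((1 ≤ k ∧ k ≤ 2 * n) ∨ k = 2 * n + 2) ∧ ((i : ℕ) + k) % (4 * n + 4) = (j : ℕ))

/-- The join `G + K_1`. -/
def joinK1 {V : Type*} (G : SimpleGraph V) : SimpleGraph (V ⊕ Unit) :=
  SimpleGraph.fromRel (fun x y =>
    match x, y with
    | Sum.inl a, Sum.inl b => G.Adj a b
    | Sum.inl _, Sum.inr _ => True
    | Sum.inr _, _ => False)

lemma aux_sum_range_le (s : Finset ℕ) : ∑ j ∈ Finset.range s.card, j ≤ ∑ k ∈ s, k := by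
  induction s using Finset.strongInduction with
  | _ s ih =>
    rcases s.eq_empty_or_nonempty with rfl | hs
    · simp
    · have hm : s.max' hs ∈ s := s.max'_mem hs
      have hsub : s ⊆ Finset.range (s.max' hs + 1) := fun x hx =>
        Finset.mem_range.2 (Nat.lt_succ_of_le (Finset.le_max' s x hx))
      have hcard : s.card ≤ s.max' hs + 1 := by
        simpa using Finset.card_le_card hsub
      have h1 := ih (s.erase (s.max' hs)) (Finset.erase_ssubset hm)
      have hce : (s.erase (s.max' hs)).card = s.card - 1 := Finset.card_erase_of_mem hm
      have hpos : 1 ≤ s.card := Finset.card_pos.2 hs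
      have hsplit : ∑ k ∈ s.erase (s.max' hs), k + s.max' hs = ∑ k ∈ s, k :=
        Finset.sum_erase_add s _ hm
      have hr : Finset.range s.card = Finset.range (s.card - 1 + 1) := by
        congr 1; omega
      rw [hr, Finset.sum_range_succ, ← hce]
      omega

lemma aux_lower {n : ℕ} (t : Finset (Fin n)) :
    ∑ j ∈ Finset.range t.card, (j + 1) ≤ ∑ i ∈ t, ((i : ℕ) + 1) := by
  have hinj : ∀ x ∈ t, ∀ y ∈ t, (x : Fin n).val = y.val → x = y := fun x _ y _ h => Fin.ext h
  have h1 : ∑ k ∈ t.image Fin.val, (k + 1) = ∑ i ∈ t, ((i : ℕ) + 1) :=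
    Finset.sum_image hinj
  have hcard : (t.image Fin.val).card = t.card := Finset.card_image_of_injOn hinj
  have := aux_sum_range_le (t.image Fin.val)
  rw [← h1, Finset.sum_add_distrib, Finset.sum_add_distrib]
  simp only [Finset.sum_const, Finset.card_range, smul_eq_mul, mul_one, hcard] at *
  omega

lemma aux_upper {n : ℕ} (t : Finset (Fin n)) :
    ∑ i ∈ t, ((i : ℕ) + 1) + ∑ j ∈ Finset.range t.card, j ≤ t.card * n := by
  have hinj : ∀ x ∈ t, ∀ y ∈ t, n - 1 - (x : Fin n).val = n - 1 - y.val → x = y := by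
    intro x _ y _ h
    have hx := x.isLt; have hy := y.isLt
    exact Fin.ext (by omega)
  have h1 : ∑ k ∈ t.image (fun i : Fin n => n - 1 - (i : ℕ)), k = ∑ i ∈ t, (n - 1 - (i : ℕ)) :=
    Finset.sum_image hinj
  have hcard : (t.image (fun i : Fin n => n - 1 - (i : ℕ))).card = t.card :=
    Finset.card_image_of_injOn hinj
  have h2 := aux_sum_range_le (t.image (fun i : Fin n => n - 1 - (i : ℕ)))
  rw [hcard] at h2
  have h3 : ∑ i ∈ t, ((i : ℕ) + 1) + ∑ i ∈ t, (n - 1 - (i : ℕ)) = t.card * n := by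
    rw [← Finset.sum_add_distrib]
    have : ∀ i ∈ t, (i : ℕ) + 1 + (n - 1 - (i : ℕ)) = n := by
      intro i _; have := i.isLt; omega
    rw [Finset.sum_congr rfl this, Finset.sum_const, smul_eq_mul]
  omega

lemma gauss_int (m : ℕ) : 2 * (∑ j ∈ Finset.range m, (j : ℤ)) = m * (m - 1) := by
  induction m with
  | zero => simp
  | succ k ih => rw [Finset.sum_range_succ]; push_cast; push_cast at ih; ring_nf; ring_nf at ih; omega

theorem regular_antimagic_bounds {V : Type*} [Fintype V] (G : SimpleGraph V)
    (r a d : ℕ) (hn : 2 ≤ Fintype.card V) (hreg : IsRegularDeg G r)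
    (h : IsDistAntimagic G a d) :
    (d : ℤ) * ((Fintype.card V : ℤ) - 1) ≤ (r : ℤ) * ((Fintype.card V : ℤ) - (r : ℤ)) ∧
    2 * (a : ℤ) = (r : ℤ) * ((Fintype.card V : ℤ) + 1) - (d : ℤ) * ((Fintype.card V : ℤ) - 1) := by
  classical
  obtain ⟨f, hf⟩ := h
  set g : V → ℕ := fun v => (f v : ℕ) + 1 with hg
  have hnpos : 0 < Fintype.card V := by omega
  have hcardV : (Finset.univ : Finset V).card = Fintype.card V := Finset.card_univ
  -- double counting
  have hdouble : ∑ u, wsum G g u = r * ∑ v, g v := by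
    unfold wsum
    calc ∑ u, ∑ v ∈ Finset.univ.filter (fun v => G.Adj u v), g v
        = ∑ u : V, ∑ v : V, if G.Adj u v then g v else 0 := by
          simp [Finset.sum_filter]
      _ = ∑ v : V, ∑ u : V, if G.Adj u v then g v else 0 := Finset.sum_comm
      _ = ∑ v : V, (Finset.univ.filter (fun u => G.Adj u v)).card * g v := by
          refine Finset.sum_congr rfl fun v _ => ?_
          rw [← Finset.sum_filter, Finset.sum_const, smul_eq_mul]
      _ = ∑ v : V, r * g v := by
          refine Finset.sum_congr rfl fun v _ => ?_
          congr 1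
          have : (Finset.univ.filter (fun u => G.Adj u v)) = (Finset.univ.filter (fun u => G.Adj v u)) := by
            apply Finset.filter_congr
            intro x _
            simp [G.adj_comm]
          rw [this, hreg v]
      _ = r * ∑ v, g v := by rw [Finset.mul_sum]
  have hlabels : ∑ v, g v = ∑ j ∈ Finset.range (Fintype.card V), (j + 1) := by
    have h1 : ∑ v, g v = ∑ i : Fin (Fintype.card V), ((i : ℕ) + 1) := by
      rw [hg]
      exact Equiv.sum_comp f (fun i : Fin (Fintype.card V) => (i : ℕ) + 1)
    rw [h1, Fin.sum_univ_eq_sum_range (fun j => j + 1)]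
  -- sum of weights equals n*a + d * gauss
  have hS : ∑ u, wsum G g u
      = Fintype.card V * a + d * ∑ j ∈ Finset.range (Fintype.card V), j := by
    rcases Nat.eq_zero_or_pos d with hd | hd
    · subst hd
      have hall : ∀ u : V, wsum G g u = a := by
        intro u
        have hu : wsum G g u ∈ Finset.image (fun u => wsum G g u) Finset.univ :=
          Finset.mem_image_of_mem _ (Finset.mem_univ u)
        rw [hf] at hu
        obtain ⟨i, _, hi⟩ := Finset.mem_image.1 hu
        omega
      rw [Finset.sum_congr rfl (fun u _ => hall u), Finset.sum_const, smul_eq_mul, hcardV]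
      simp
    · have hinj : Function.Injective (fun i : Fin (Fintype.card V) => a + (i : ℕ) * d) := by
        intro i j hij
        simp only at hij
        exact Fin.ext (Nat.eq_of_mul_eq_mul_right hd (by omega))
      have hcard1 : (Finset.image (fun i : Fin (Fintype.card V) => a + (i : ℕ) * d)
          Finset.univ).card = Fintype.card V := by
        rw [Finset.card_image_of_injective _ hinj, Finset.card_univ, Fintype.card_fin]
      have hcard2 : ((Finset.univ : Finset V).image (fun u => wsum G g u)).card
          = (Finset.univ : Finset V).card := by
        rw [hf, hcard1, hcardV]
      have hinjOn : Set.InjOn (fun u => wsum G g u) (Finset.univ : Finset V) :=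
        Finset.card_image_iff.mp hcard2
      have e1 : ∑ x ∈ (Finset.univ : Finset V).image (fun u => wsum G g u), x
          = ∑ u, wsum G g u :=
        Finset.sum_image (fun x hx y hy hxy => hinjOn hx hy hxy)
      have e2 : ∑ x ∈ Finset.image (fun i : Fin (Fintype.card V) => a + (i : ℕ) * d)
            Finset.univ, x
          = ∑ i : Fin (Fintype.card V), (a + (i : ℕ) * d) :=
        Finset.sum_image (fun x _ y _ hxy => hinj hxy)
      have e3 : ∑ i : Fin (Fintype.card V), (a + (i : ℕ) * d)
          = Fintype.card V * a + d * ∑ j ∈ Finset.range (Fintype.card V), j := by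
        rw [Finset.sum_add_distrib, Finset.sum_const, Finset.card_univ, Fintype.card_fin,
          smul_eq_mul]
        congr 1
        rw [Fin.sum_univ_eq_sum_range (fun j => j * d), ← Finset.sum_mul, mul_comm]
      rw [← e1, hf, e2, e3]
  -- extreme weights
  obtain ⟨u0, -, hu0⟩ : ∃ u0 ∈ (Finset.univ : Finset V), wsum G g u0 = a := by
    have h0 : a ∈ Finset.image (fun i : Fin (Fintype.card V) => a + (i : ℕ) * d)
        Finset.univ :=
      Finset.mem_image.2 ⟨⟨0, hnpos⟩, Finset.mem_univ _, by simp⟩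
    rw [← hf] at h0
    exact Finset.mem_image.1 h0
  obtain ⟨u1, -, hu1⟩ : ∃ u1 ∈ (Finset.univ : Finset V),
      wsum G g u1 = a + (Fintype.card V - 1) * d := by
    have h0 : a + (Fintype.card V - 1) * d
        ∈ Finset.image (fun i : Fin (Fintype.card V) => a + (i : ℕ) * d) Finset.univ :=
      Finset.mem_image.2 ⟨⟨Fintype.card V - 1, by omega⟩, Finset.mem_univ _, by simp⟩
    rw [← hf] at h0
    exact Finset.mem_image.1 h0
  -- per-vertex bounds
  have hbounds : ∀ u : V, (∑ j ∈ Finset.range r, (j + 1) ≤ wsum G g u)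
      ∧ (wsum G g u + ∑ j ∈ Finset.range r, j ≤ r * Fintype.card V) := by
    intro u
    set t : Finset (Fin (Fintype.card V)) := (Finset.univ.filter (fun v => G.Adj u v)).image f
      with ht
    have htcard : t.card = r := by
      rw [ht, Finset.card_image_of_injective _ f.injective, hreg u]
    have hw : wsum G g u = ∑ i ∈ t, ((i : ℕ) + 1) := by
      rw [ht, Finset.sum_image (fun x _ y _ hxy => f.injective hxy)]
      rfl
    have h1 := aux_lower t
    have h2 := aux_upper t
    rw [htcard] at h1 h2
    rw [hw]
    exact ⟨h1, h2⟩
  obtain ⟨hl0, -⟩ := hbounds u0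
  obtain ⟨-, hl1⟩ := hbounds u1
  -- cast everything to ℤ
  have hG := gauss_int (Fintype.card V)
  have hGr := gauss_int r
  have hcastn : ((Fintype.card V - 1 : ℕ) : ℤ) = (Fintype.card V : ℤ) - 1 := by
    have h1 : (1:ℕ) ≤ Fintype.card V := by omega
    simpa using Nat.cast_sub h1
  -- the equation, in ℤ
  have hEq : (r : ℤ) * ∑ j ∈ Finset.range (Fintype.card V), ((j : ℤ) + 1)
      = (Fintype.card V : ℤ) * a + d * ∑ j ∈ Finset.range (Fintype.card V), (j : ℤ) := by
    have h1 := hdouble.trans (by rw [hlabels])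
    rw [hS] at h1
    have h2 := congrArg (fun x : ℕ => (x : ℤ)) h1
    push_cast at h2
    linarith [h2]
  have hSsplit : ∑ j ∈ Finset.range (Fintype.card V), ((j : ℤ) + 1)
      = (∑ j ∈ Finset.range (Fintype.card V), (j : ℤ)) + Fintype.card V := by
    rw [Finset.sum_add_distrib]; simp
  have part2 : 2 * (a : ℤ)
      = (r : ℤ) * ((Fintype.card V : ℤ) + 1) - (d : ℤ) * ((Fintype.card V : ℤ) - 1) := by
    have key : (Fintype.card V : ℤ) * (2 * a)
        = (Fintype.card V : ℤ) *
          ((r : ℤ) * ((Fintype.card V : ℤ) + 1) - (d : ℤ) * ((Fintype.card V : ℤ) - 1)) := by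
      rw [hSsplit] at hEq
      nlinarith [hEq, hG]
    have hn0 : (Fintype.card V : ℤ) ≠ 0 := by exact_mod_cast hnpos.ne'
    exact mul_left_cancel₀ hn0 key
  refine ⟨?_, part2⟩
  have c1 : ((wsum G g u1 : ℕ) : ℤ) + ∑ j ∈ Finset.range r, (j : ℤ)
      ≤ (r : ℤ) * Fintype.card V := by
    have h1 : ((wsum G g u1 + ∑ j ∈ Finset.range r, j : ℕ) : ℤ)
        ≤ ((r * Fintype.card V : ℕ) : ℤ) := Nat.cast_le.mpr hl1
    push_cast at h1
    exact h1
  have c2 : (∑ j ∈ Finset.range r, ((j : ℤ) + 1)) ≤ ((wsum G g u0 : ℕ) : ℤ) := by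
    exact_mod_cast hl0
  have hw1 : ((wsum G g u1 : ℕ) : ℤ) = (a : ℤ) + ((Fintype.card V : ℤ) - 1) * d := by
    rw [hu1]
    push_cast [hcastn]
    ring
  have hw0 : ((wsum G g u0 : ℕ) : ℤ) = (a : ℤ) := by exact_mod_cast hu0
  have hrsplit : ∑ j ∈ Finset.range r, ((j : ℤ) + 1)
      = (∑ j ∈ Finset.range r, (j : ℤ)) + r := by
    rw [Finset.sum_add_distrib]; simp
  rw [hw1] at c1
  rw [hrsplit, hw0] at c2
  nlinarith [c1, c2, hGr]
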